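/- For every graph G, Boppana's lower bound coincides with both Feige–Kilian SDP bounds: h(G) = h_p(G) = h_d(G), where h_p(G) = inf { ∑_{{i,j}∈E, i<j} (1 − Y_{ij})/2 : Y ∈ ℝ^{n×n} symmetric positive semidefinite, Y_{ii} = 1 for all i, ∑_{i,j} Y_{ij} = 0 } and h_d(G) = sup { |E|/2 + (1/4)∑_i x_i : x₀ ∈ ℝ, x ∈ ℝ^n, and −A − x₀·J − diag(x) is positive semidefinite }. -/

import Mathlib

open Matrix BigOperators Finset

noncomputable section

/-- Adjacency matrix of a graph on `Fin n`, with real entries. -/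
def adjA {n : ℕ} (G : SimpleGraph (Fin n)) [DecidableRel G.Adj] :
    Matrix (Fin n) (Fin n) ℝ :=
  Matrix.of fun i j => if G.Adj i j then (1 : ℝ) else 0

/-- A bisection vector: entries in `{+1, -1}` summing to zero. -/
def IsBisection {n : ℕ} (x : Fin n → ℝ) : Prop :=
  (∀ i, x i = 1 ∨ x i = -1) ∧ ∑ i, x i = 0

/-- Cut width of a `±1` vector: `∑_{{i,j}∈E} (1 - x_i x_j)/2`, written as a sum
over ordered pairs (each edge counted twice, hence the `/4`). -/
def cw {n : ℕ} (G : SimpleGraph (Fin n)) [DecidableRel G.Adj] (x : Fin n → ℝ) : ℝ :=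
  (∑ i, ∑ j, adjA G i j * (1 - x i * x j)) / 4

/-- Bisection width: minimum cut width over all bisection vectors. -/
def bw {n : ℕ} (G : SimpleGraph (Fin n)) [DecidableRel G.Adj] : ℝ :=
  sInf {c | ∃ x : Fin n → ℝ, IsBisection x ∧ cw G x = c}

/-- `λ_S(B)`: supremum of the Rayleigh quotient of `B` over nonzero vectors of
coordinate sum zero. -/
def lamS {n : ℕ} (B : Matrix (Fin n) (Fin n) ℝ) : ℝ :=
  sSup {r | ∃ x : Fin n → ℝ, x ≠ 0 ∧ ∑ i, x i = 0 ∧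
    r = (x ⬝ᵥ B.mulVec x) / (∑ i, (x i) ^ 2)}

/-- Sum of all entries of a matrix. -/
def msum {n : ℕ} (M : Matrix (Fin n) (Fin n) ℝ) : ℝ := ∑ i, ∑ j, M i j

/-- Boppana's function `g(G,d)`. -/
def gB {n : ℕ} (G : SimpleGraph (Fin n)) [DecidableRel G.Adj] (d : Fin n → ℝ) : ℝ :=
  (msum (adjA G + Matrix.diagonal d) - n * lamS (adjA G + Matrix.diagonal d)) / 4

/-- Boppana's lower bound `h(G) = sup_d g(G,d)`. -/
def hB {n : ℕ} (G : SimpleGraph (Fin n)) [DecidableRel G.Adj] : ℝ :=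
  sSup {r | ∃ d : Fin n → ℝ, r = gB G d}

/-- Number of edges of `G`. -/
def edgeCount {n : ℕ} (G : SimpleGraph (Fin n)) [DecidableRel G.Adj] : ℕ :=
  G.edgeFinset.card

/-- The all-ones matrix `J`. -/
def Jmat (n : ℕ) : Matrix (Fin n) (Fin n) ℝ := Matrix.of fun _ _ => (1 : ℝ)

/-- The projection matrix `P = I - J/n`. -/
def Pmat (n : ℕ) : Matrix (Fin n) (Fin n) ℝ := 1 - (n : ℝ)⁻¹ • Jmat n

/-- The Feige–Kilian primal SDP value `h_p(G)`. -/
def hP {n : ℕ} (G : SimpleGraph (Fin n)) [DecidableRel G.Adj] : ℝ :=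
  sInf {r | ∃ Y : Matrix (Fin n) (Fin n) ℝ, Y.PosSemidef ∧
    (∀ i, Y i i = 1) ∧ (∑ i, ∑ j, Y i j) = 0 ∧
    r = ∑ i, ∑ j, if i < j then adjA G i j * (1 - Y i j) / 2 else 0}

/-- The Feige–Kilian dual SDP value `h_d(G)`. -/
def hD {n : ℕ} (G : SimpleGraph (Fin n)) [DecidableRel G.Adj] : ℝ :=
  sSup {r | ∃ (x₀ : ℝ) (x : Fin n → ℝ),
    (-(adjA G) - x₀ • Jmat n - Matrix.diagonal x).PosSemidef ∧
    r = (edgeCount G : ℝ) / 2 + (∑ i, x i) / 4}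

noncomputable section

lemma dot_mulVec_expand {n : ℕ} (M : Matrix (Fin n) (Fin n) ℝ) (v w : Fin n → ℝ) :
    v ⬝ᵥ M.mulVec w = ∑ i, ∑ j, M i j * v i * w j := by
  simp only [dotProduct, mulVec, Finset.mul_sum]
  refine Finset.sum_congr rfl fun i _ => Finset.sum_congr rfl fun j _ => by ring

lemma psd_iff {n : ℕ} (M : Matrix (Fin n) (Fin n) ℝ) :
    M.PosSemidef ↔ M.IsHermitian ∧ ∀ v : Fin n → ℝ, 0 ≤ v ⬝ᵥ M.mulVec v := by
  constructor
  · exact fun h => ⟨h.1, fun v => by simpa using (posSemidef_iff_dotProduct_mulVec.1 h).2 v⟩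
  · exact fun h => posSemidef_iff_dotProduct_mulVec.2 ⟨h.1, fun v => by simpa using h.2 v⟩

lemma sq_sum_pos {n : ℕ} {x : Fin n → ℝ} (hx : x ≠ 0) : 0 < ∑ i, (x i) ^ 2 := by
  rcases Function.ne_iff.1 hx with ⟨i, hi⟩
  have h1 : (0:ℝ) < x i ^ 2 :=
    lt_of_le_of_ne (sq_nonneg _) (Ne.symm (pow_ne_zero 2 hi))
  exact lt_of_lt_of_le h1 (Finset.single_le_sum (fun j _ => sq_nonneg (x j)) (mem_univ i))

lemma ip_nonneg {n : ℕ} {M Y : Matrix (Fin n) (Fin n) ℝ}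
    (hM : M.PosSemidef) (hY : Y.PosSemidef) : 0 ≤ ∑ i, ∑ j, M i j * Y i j := by
  obtain ⟨B, rfl⟩ : ∃ B : Matrix (Fin n) (Fin n) ℝ, Y = Bᴴ * B := by
    open scoped MatrixOrder in exact CStarAlgebra.nonneg_iff_eq_star_mul_self.mp hY.nonneg
  have hent : ∀ i j, (Bᴴ * B) i j = ∑ k, B k i * B k j := by
    intro i j
    simp [Matrix.mul_apply, Matrix.conjTranspose_apply]
  calc ∑ i, ∑ j, M i j * (Bᴴ * B) i j
      = ∑ i, ∑ j, ∑ k, M i j * B k i * B k j := by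
        simp only [hent, Finset.mul_sum, mul_assoc]
    _ = ∑ i, ∑ k, ∑ j, M i j * B k i * B k j :=
        Finset.sum_congr rfl fun i _ => Finset.sum_comm
    _ = ∑ k, ∑ i, ∑ j, M i j * B k i * B k j := Finset.sum_comm
    _ ≥ 0 := by
        refine Finset.sum_nonneg fun k _ => ?_
        rw [← dot_mulVec_expand]
        exact (psd_iff M).1 hM |>.2 _
section Graph
variable {n : ℕ} (G : SimpleGraph (Fin n)) [DecidableRel G.Adj]

lemma adjA_symm (i j : Fin n) : adjA G i j = adjA G j i := by
  simp [adjA, G.adj_comm]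

lemma adjA_diag (i : Fin n) : adjA G i i = 0 := by simp [adjA]

lemma msum_adjA : msum (adjA G) = 2 * (edgeCount G : ℝ) := by
  have hdeg : ∀ i, ∑ j, adjA G i j = (G.degree i : ℝ) := by
    intro i
    simp [adjA, SimpleGraph.degree, SimpleGraph.neighborFinset_eq_filter,
      Finset.sum_boole]
  have := G.sum_degrees_eq_twice_card_edges
  have h2 : (∑ i, (G.degree i : ℝ)) = 2 * (edgeCount G : ℝ) := by
    rw [← Nat.cast_sum]
    rw [this]
    push_cast [edgeCount]
    ring
  simpa [msum, hdeg] using h2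

lemma quad_adjA_le (v : Fin n → ℝ) :
    v ⬝ᵥ (adjA G).mulVec v ≤ n * ∑ i, (v i) ^ 2 := by
  rw [dot_mulVec_expand]
  have h1 : ∀ i j : Fin n, adjA G i j * v i * v j ≤ |v i| * |v j| := by
    intro i j
    have h0 : (0:ℝ) ≤ adjA G i j := by simp [adjA]; split <;> norm_num
    have h1 : adjA G i j ≤ 1 := by simp [adjA]; split <;> norm_num
    have := abs_nonneg (v i)
    have := abs_nonneg (v j)
    have hvi := le_abs_self (v i)
    have hvj := le_abs_self (v j)
    have habs : v i * v j ≤ |v i| * |v j| := by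
      calc v i * v j ≤ |v i * v j| := le_abs_self _
        _ = |v i| * |v j| := abs_mul _ _
    nlinarith [mul_le_mul_of_nonneg_left habs h0,
      mul_nonneg (abs_nonneg (v i)) (abs_nonneg (v j))]
  calc ∑ i, ∑ j, adjA G i j * v i * v j ≤ ∑ i, ∑ j, |v i| * |v j| := by
        exact Finset.sum_le_sum fun i _ => Finset.sum_le_sum fun j _ => h1 i j
    _ = (∑ i, |v i|) ^ 2 := by rw [sq, Finset.sum_mul_sum]
    _ ≤ (n : ℝ) * ∑ i, (v i)^2 := by
        have := Finset.sum_mul_sq_le_sq_mul_sq (univ : Finset (Fin n))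
          (fun _ => (1:ℝ)) (fun i => |v i|)
        simpa [sq_abs, Finset.card_univ] using this

end Graph
section Msum
variable {n : ℕ}

lemma msum_add (M N : Matrix (Fin n) (Fin n) ℝ) : msum (M + N) = msum M + msum N := by
  simp [msum, Finset.sum_add_distrib]

lemma msum_diagonal (d : Fin n → ℝ) : msum (Matrix.diagonal d) = ∑ i, d i := by
  simp [msum, Matrix.diagonal]

/-- quadratic form of the dual matrix. -/
lemma quadM (G : SimpleGraph (Fin n)) [DecidableRel G.Adj] (x₀ : ℝ) (x v : Fin n → ℝ) :
    v ⬝ᵥ (-(adjA G) - x₀ • Jmat n - Matrix.diagonal x).mulVec v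
      = -(v ⬝ᵥ (adjA G).mulVec v) - x₀ * (∑ i, v i) ^ 2 - ∑ i, x i * (v i) ^ 2 := by
  have hent : ∀ i j, (-(adjA G) - x₀ • Jmat n - Matrix.diagonal x) i j
      = -(adjA G i j) - x₀ - (if i = j then x i else 0) := by
    intro i j
    simp [Matrix.sub_apply, Matrix.neg_apply, Matrix.smul_apply, Jmat,
      Matrix.diagonal_apply, smul_eq_mul]
  rw [dot_mulVec_expand, dot_mulVec_expand]
  have key : ∀ i j : Fin n, (-(adjA G) - x₀ • Jmat n - Matrix.diagonal x) i j * v i * v j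
      = -(adjA G i j * v i * v j) - x₀ * (v i * v j)
        - (if i = j then x i else 0) * v i * v j := by
    intro i j; rw [hent]; ring
  simp only [key, Finset.sum_sub_distrib]
  congr 1
  · congr 1
    · simp [Finset.sum_neg_distrib]
    · rw [sq, Finset.sum_mul_sum, Finset.mul_sum]
      refine Finset.sum_congr rfl fun i _ => ?_
      rw [Finset.mul_sum]
  · refine Finset.sum_congr rfl fun i _ => ?_
    rw [Finset.sum_eq_single i]
    · simp [sq]; ring
    · intro j _ hj; simp [Ne.symm hj]
    · intro h; exact absurd (mem_univ i) h

lemma quadB (G : SimpleGraph (Fin n)) [DecidableRel G.Adj] (d v : Fin n → ℝ) :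
    v ⬝ᵥ (adjA G + Matrix.diagonal d).mulVec v
      = v ⬝ᵥ (adjA G).mulVec v + ∑ i, d i * (v i) ^ 2 := by
  rw [dot_mulVec_expand, dot_mulVec_expand]
  have key : ∀ i j : Fin n, (adjA G + Matrix.diagonal d) i j * v i * v j
      = adjA G i j * v i * v j + (if i = j then d i else 0) * v i * v j := by
    intro i j; simp only [Matrix.add_apply, Matrix.diagonal_apply]; ring
  simp only [key, Finset.sum_add_distrib]
  congr 1
  refine Finset.sum_congr rfl fun i _ => ?_
  rw [Finset.sum_eq_single i]
  · simp [sq]; ring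
  · intro j _ hj; simp [Ne.symm hj]
  · intro h; exact absurd (mem_univ i) h

end Msum
section LamS
variable {n : ℕ}

def RaySet (B : Matrix (Fin n) (Fin n) ℝ) : Set ℝ :=
  {r | ∃ x : Fin n → ℝ, x ≠ 0 ∧ ∑ i, x i = 0 ∧
    r = (x ⬝ᵥ B.mulVec x) / (∑ i, (x i) ^ 2)}

lemma lamS_eq (B : Matrix (Fin n) (Fin n) ℝ) : lamS B = sSup (RaySet B) := rfl

lemma ray_nonempty (hn2 : 2 ≤ n) (B : Matrix (Fin n) (Fin n) ℝ) :
    (RaySet B).Nonempty := by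
  have h0 : (0:ℕ) < n := by omega
  have h1 : (1:ℕ) < n := by omega
  set x : Fin n → ℝ := Pi.single ⟨0, h0⟩ 1 - Pi.single ⟨1, h1⟩ 1 with hx
  have hne01 : (⟨0, h0⟩ : Fin n) ≠ ⟨1, h1⟩ := by simp [Fin.ext_iff]
  have hxne : x ≠ 0 := by
    intro h
    have := congrFun h ⟨0, h0⟩
    simp [hx, Pi.single_apply, hne01] at this
  have hxsum : ∑ i, x i = 0 := by
    simp [hx, Pi.single_apply, Finset.sum_sub_distrib]
  exact ⟨_, x, hxne, hxsum, rfl⟩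

lemma ray_bddAbove (B : Matrix (Fin n) (Fin n) ℝ) : BddAbove (RaySet B) := by
  refine ⟨∑ i, ∑ j, |B i j|, fun r hr => ?_⟩
  obtain ⟨x, hxne, -, rfl⟩ := hr
  have hs : 0 < ∑ i, (x i) ^ 2 := sq_sum_pos hxne
  rw [div_le_iff₀ hs, dot_mulVec_expand]
  have key : ∀ i j : Fin n, B i j * x i * x j ≤ |B i j| * ∑ k, (x k) ^ 2 := by
    intro i j
    have hxi : (x i) ^ 2 ≤ ∑ k, (x k) ^ 2 :=
      Finset.single_le_sum (fun k _ => sq_nonneg (x k)) (mem_univ i)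
    have hxj : (x j) ^ 2 ≤ ∑ k, (x k) ^ 2 :=
      Finset.single_le_sum (fun k _ => sq_nonneg (x k)) (mem_univ j)
    rcases abs_cases (B i j) with ⟨h1, h2⟩ | ⟨h1, h2⟩ <;> nlinarith [sq_nonneg (x i - x j), sq_nonneg (x i + x j)]
  calc ∑ i, ∑ j, B i j * x i * x j
      ≤ ∑ i, ∑ j, |B i j| * ∑ k, (x k) ^ 2 :=
        Finset.sum_le_sum fun i _ => Finset.sum_le_sum fun j _ => key i j
    _ = (∑ i, ∑ j, |B i j|) * ∑ k, (x k) ^ 2 := by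
        rw [Finset.sum_mul]
        exact Finset.sum_congr rfl fun i _ => by rw [Finset.sum_mul]

lemma le_lamS {B : Matrix (Fin n) (Fin n) ℝ} {x : Fin n → ℝ}
    (hxne : x ≠ 0) (hxsum : ∑ i, x i = 0) :
    (x ⬝ᵥ B.mulVec x) / (∑ i, (x i) ^ 2) ≤ lamS B :=
  le_csSup (ray_bddAbove B) ⟨x, hxne, hxsum, rfl⟩

lemma quad_le_lamS {B : Matrix (Fin n) (Fin n) ℝ} {x : Fin n → ℝ}
    (hxsum : ∑ i, x i = 0) :
    x ⬝ᵥ B.mulVec x ≤ lamS B * ∑ i, (x i) ^ 2 := by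
  by_cases hx : x = 0
  · subst hx; simp
  · have hs := sq_sum_pos hx
    have := le_lamS (B := B) hx hxsum
    calc x ⬝ᵥ B.mulVec x = ((x ⬝ᵥ B.mulVec x) / (∑ i, (x i) ^ 2)) * ∑ i, (x i) ^ 2 := by
          field_simp
      _ ≤ lamS B * ∑ i, (x i) ^ 2 := by
          exact mul_le_mul_of_nonneg_right this hs.le

lemma lamS_le (hn2 : 2 ≤ n) {B : Matrix (Fin n) (Fin n) ℝ} {c : ℝ}
    (h : ∀ x : Fin n → ℝ, x ≠ 0 → ∑ i, x i = 0 → x ⬝ᵥ B.mulVec x ≤ c * ∑ i, (x i) ^ 2) :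
    lamS B ≤ c := by
  refine csSup_le (ray_nonempty hn2 B) ?_
  rintro r ⟨x, hxne, hxsum, rfl⟩
  rw [div_le_iff₀ (sq_sum_pos hxne)]
  exact h x hxne hxsum

end LamS

/-- A canonical bisection vector. -/
def xbar (n : ℕ) : Fin n → ℝ := fun i => if (i : ℕ) < n / 2 then 1 else -1

section Xbar
variable {n : ℕ}

lemma xbar_sq (i : Fin n) : (xbar n i) ^ 2 = 1 := by
  unfold xbar; split <;> norm_num

lemma xbar_sum_sq : ∑ i, (xbar n i) ^ 2 = (n : ℝ) := by
  simp [xbar_sq]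

lemma xbar_sum (hne : Even n) : ∑ i, xbar n i = 0 := by
  obtain ⟨m, hm⟩ := hne
  have hm2 : n / 2 = m := by omega
  have : ∑ i, xbar n i = ∑ k ∈ Finset.range n, (if k < n / 2 then (1:ℝ) else -1) :=
    Fin.sum_univ_eq_sum_range (fun k => if k < n / 2 then (1:ℝ) else -1) n
  rw [this, hm, Finset.sum_range_add]
  have hmm : (m + m) / 2 = m := by omega
  rw [hmm]
  rw [Finset.sum_congr rfl (fun k hk => if_pos (Finset.mem_range.1 hk)),
    Finset.sum_congr rfl (fun k _ => if_neg (by omega : ¬ m + k < m))]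
  simp

lemma xbar_ne_zero (hn2 : 2 ≤ n) : xbar n ≠ 0 := by
  have h0 : (0:ℕ) < n := by omega
  intro h
  have := congrFun h ⟨0, h0⟩
  have h02 : (0:ℕ) < n / 2 := by omega
  simp [xbar, h02] at this

end Xbar
section Bounds
variable {n : ℕ} (G : SimpleGraph (Fin n)) [DecidableRel G.Adj]

/-- Uniform upper bound for Boppana's function. -/
def Ub (G : SimpleGraph (Fin n)) [DecidableRel G.Adj] : ℝ :=
  (∑ i, ∑ j, adjA G i j * (1 - xbar n i * xbar n j)) / 4

lemma gB_le_Ub (hn2 : 2 ≤ n) (hne : Even n) (d : Fin n → ℝ) : gB G d ≤ Ub G := by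
  set B := adjA G + Matrix.diagonal d with hB
  have hnpos : (0:ℝ) < n := by
    have : 0 < n := by omega
    exact_mod_cast this
  have hray : (xbar n ⬝ᵥ B.mulVec (xbar n)) / (∑ i, (xbar n i) ^ 2) ≤ lamS B :=
    le_lamS (xbar_ne_zero hn2) (xbar_sum hne)
  rw [xbar_sum_sq] at hray
  have hq : xbar n ⬝ᵥ B.mulVec (xbar n) ≤ (n:ℝ) * lamS B := by
    rw [div_le_iff₀ hnpos] at hray
    linarith
  have hexp : xbar n ⬝ᵥ B.mulVec (xbar n)
      = (∑ i, ∑ j, adjA G i j * (xbar n i * xbar n j)) + ∑ i, d i := by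
    rw [hB, quadB, dot_mulVec_expand]
    congr 1
    · exact Finset.sum_congr rfl fun i _ => Finset.sum_congr rfl fun j _ => by ring
    · simp [xbar_sq]
  have hmsum : msum B = msum (adjA G) + ∑ i, d i := by
    rw [hB, msum_add, msum_diagonal]
  have hsplit : ∑ i, ∑ j, adjA G i j * (1 - xbar n i * xbar n j)
      = msum (adjA G) - ∑ i, ∑ j, adjA G i j * (xbar n i * xbar n j) := by
    simp only [mul_sub, mul_one, Finset.sum_sub_distrib, msum]
  show (msum B - n * lamS B) / 4 ≤ Ub G
  rw [Ub, hsplit]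
  linarith

/-- Every dual-feasible value is at most `gB G x`. -/
lemma dualfeas_le_gB (hn2 : 2 ≤ n) (x₀ : ℝ) (x : Fin n → ℝ)
    (hpsd : (-(adjA G) - x₀ • Jmat n - Matrix.diagonal x).PosSemidef) :
    (edgeCount G : ℝ) / 2 + (∑ i, x i) / 4 ≤ gB G x := by
  set B := adjA G + Matrix.diagonal x with hB
  have hlam : lamS B ≤ 0 := by
    refine lamS_le hn2 fun v hvne hvsum => ?_
    have h1 := ((psd_iff _).1 hpsd).2 v
    rw [quadM] at h1
    rw [hB, quadB]
    rw [hvsum] at h1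
    nlinarith [h1]
  have hmsum : msum B = 2 * (edgeCount G : ℝ) + ∑ i, x i := by
    rw [hB, msum_add, msum_diagonal, msum_adjA]
  have hnn : (0:ℝ) ≤ n := by positivity
  show _ ≤ (msum B - n * lamS B) / 4
  nlinarith [mul_nonpos_of_nonneg_of_nonpos hnn hlam]

end Bounds
section Pairs
variable {n : ℕ}

lemma sum_pairs (f : Fin n → Fin n → ℝ) (hsymm : ∀ i j, f i j = f j i)
    (hdiag : ∀ i, f i i = 0) :
    ∑ i, ∑ j, f i j = 2 * ∑ i, ∑ j, (if i < j then f i j else 0) := by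
  have hpt : ∀ i j : Fin n, f i j
      = (if i < j then f i j else 0) + (if j < i then f i j else 0) := by
    intro i j
    rcases lt_trichotomy i j with h | h | h
    · simp [h, asymm h]
    · subst h; simp [lt_irrefl, hdiag]
    · simp [h, asymm h]
  calc ∑ i, ∑ j, f i j
      = (∑ i, ∑ j, (if i < j then f i j else 0)) + ∑ i, ∑ j, (if j < i then f i j else 0) := by
        simp only [← Finset.sum_add_distrib]
        exact Finset.sum_congr rfl fun i _ => Finset.sum_congr rfl fun j _ => hpt i j
    _ = 2 * ∑ i, ∑ j, (if i < j then f i j else 0) := by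
        have : ∑ i, ∑ j, (if j < i then f i j else 0)
            = ∑ i, ∑ j, (if i < j then f i j else 0) := by
          rw [Finset.sum_comm]
          exact Finset.sum_congr rfl fun i _ => Finset.sum_congr rfl fun j _ => by
            rw [hsymm]
        rw [this]; ring

/-- symmetry of entries of a PSD real matrix -/
lemma psd_symm_entries {Y : Matrix (Fin n) (Fin n) ℝ} (hY : Y.PosSemidef) (i j : Fin n) :
    Y i j = Y j i := by
  have := hY.1
  have h := congrFun (congrFun this i) j
  simpa [Matrix.conjTranspose_apply] using h.symm

/-- Primal objective rewriting. -/
lemma primal_obj_eq (G : SimpleGraph (Fin n)) [DecidableRel G.Adj]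
    {Y : Matrix (Fin n) (Fin n) ℝ} (hY : Y.PosSemidef) :
    (∑ i, ∑ j, if i < j then adjA G i j * (1 - Y i j) / 2 else 0)
      = (edgeCount G : ℝ) / 2 - (∑ i, ∑ j, adjA G i j * Y i j) / 4 := by
  have key : ∑ i, ∑ j, adjA G i j * (1 - Y i j) / 2
      = 2 * ∑ i, ∑ j, (if i < j then adjA G i j * (1 - Y i j) / 2 else 0) := by
    refine sum_pairs _ (fun i j => ?_) (fun i => by simp [adjA_diag])
    rw [adjA_symm, psd_symm_entries hY]
  have lhs_eq : ∑ i, ∑ j, adjA G i j * (1 - Y i j) / 2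
      = (msum (adjA G) - ∑ i, ∑ j, adjA G i j * Y i j) / 2 := by
    rw [msum, ← Finset.sum_sub_distrib]
    rw [Finset.sum_div]
    refine Finset.sum_congr rfl fun i _ => ?_
    rw [← Finset.sum_sub_distrib, Finset.sum_div]
    exact Finset.sum_congr rfl fun j _ => by ring
  have := key.symm.trans lhs_eq
  rw [msum_adjA] at this
  linarith

end Pairs
section Weak
variable {n : ℕ} (G : SimpleGraph (Fin n)) [DecidableRel G.Adj]

lemma ip_dual_expand (x₀ : ℝ) (x : Fin n → ℝ) (Y : Matrix (Fin n) (Fin n) ℝ) :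
    ∑ i, ∑ j, (-(adjA G) - x₀ • Jmat n - Matrix.diagonal x) i j * Y i j
      = -(∑ i, ∑ j, adjA G i j * Y i j) - x₀ * msum Y - ∑ i, x i * Y i i := by
  have hent : ∀ i j, (-(adjA G) - x₀ • Jmat n - Matrix.diagonal x) i j * Y i j
      = -(adjA G i j * Y i j) - x₀ * Y i j - (if i = j then x i * Y i j else 0) := by
    intro i j
    simp only [Matrix.sub_apply, Matrix.neg_apply, Matrix.smul_apply, Jmat,
      Matrix.diagonal_apply, smul_eq_mul, Matrix.of_apply]
    split <;> ring
  simp only [hent, Finset.sum_sub_distrib]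
  congr 1
  · congr 1
    · simp
    · rw [msum, Finset.mul_sum]
      exact Finset.sum_congr rfl fun i _ => by rw [Finset.mul_sum]
  · refine Finset.sum_congr rfl fun i _ => ?_
    rw [Finset.sum_eq_single i]
    · simp
    · intro j _ hj; simp [Ne.symm hj]
    · intro h; exact absurd (mem_univ i) h

lemma weak_duality (x₀ : ℝ) (x : Fin n → ℝ)
    (hpsd : (-(adjA G) - x₀ • Jmat n - Matrix.diagonal x).PosSemidef)
    {Y : Matrix (Fin n) (Fin n) ℝ} (hY : Y.PosSemidef)
    (hdiag : ∀ i, Y i i = 1) (hsum0 : (∑ i, ∑ j, Y i j) = 0) :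
    (edgeCount G : ℝ) / 2 + (∑ i, x i) / 4
      ≤ ∑ i, ∑ j, if i < j then adjA G i j * (1 - Y i j) / 2 else 0 := by
  have h0 := ip_nonneg hpsd hY
  rw [ip_dual_expand] at h0
  have hmsY : msum Y = 0 := hsum0
  rw [hmsY] at h0
  simp only [hdiag, mul_one] at h0
  rw [primal_obj_eq G hY]
  linarith

end Weak
section PsdEntries
variable {n : ℕ}

lemma quad_single (M : Matrix (Fin n) (Fin n) ℝ) (a : ℝ) (i : Fin n) :
    (Pi.single i a) ⬝ᵥ M.mulVec (Pi.single i a) = M i i * a ^ 2 := by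
  rw [dot_mulVec_expand]
  simp [Pi.single_apply, mul_ite, ite_mul, Finset.sum_ite_eq, sq]
  ring

lemma quad_single_pair (M : Matrix (Fin n) (Fin n) ℝ) (a b : ℝ) {i j : Fin n}
    (hij : i ≠ j) :
    (Pi.single i a + Pi.single j b) ⬝ᵥ M.mulVec (Pi.single i a + Pi.single j b)
      = M i i * a ^ 2 + M i j * a * b + M j i * b * a + M j j * b ^ 2 := by
  rw [dot_mulVec_expand]
  simp only [Pi.add_apply, Pi.single_apply, mul_add, add_mul, mul_ite, ite_mul,
    mul_zero, zero_mul, Finset.sum_add_distrib, Finset.sum_ite_eq, mem_univ,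
    if_true]
  simp only [Finset.sum_add_distrib, Finset.sum_ite_eq', mem_univ, if_true]
  ring

lemma psd_diag_nonneg {X : Matrix (Fin n) (Fin n) ℝ} (hX : X.PosSemidef) (i : Fin n) :
    0 ≤ X i i := by
  have := ((psd_iff X).1 hX).2 (Pi.single i 1)
  rw [quad_single] at this
  simpa using this

lemma psd_entry_abs_le {X : Matrix (Fin n) (Fin n) ℝ} (hX : X.PosSemidef) (i j : Fin n) :
    |X i j| ≤ (X i i + X j j) / 2 := by
  by_cases hij : i = j
  · subst hij
    rw [abs_of_nonneg (psd_diag_nonneg hX i)]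
    linarith
  · have h1 := ((psd_iff X).1 hX).2 (Pi.single i 1 + Pi.single j 1)
    have h2 := ((psd_iff X).1 hX).2 (Pi.single i 1 + Pi.single j (-1))
    rw [quad_single_pair X 1 1 hij] at h1
    rw [quad_single_pair X 1 (-1) hij] at h2
    have hs := psd_symm_entries hX i j
    rw [abs_le]
    constructor <;> nlinarith

lemma psd_offdiag_le_one {Y : Matrix (Fin n) (Fin n) ℝ} (hY : Y.PosSemidef)
    (hdiag : ∀ i, Y i i = 1) (i j : Fin n) : Y i j ≤ 1 := by
  have := psd_entry_abs_le hY i j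
  rw [hdiag, hdiag] at this
  have := le_of_abs_le this
  linarith

/-- outer product is PSD -/
lemma outer_posSemidef (x : Fin n → ℝ) :
    (Matrix.of fun i j => x i * x j : Matrix (Fin n) (Fin n) ℝ).PosSemidef := by
  rw [psd_iff]
  constructor
  · ext i j
    simp [Matrix.conjTranspose_apply, mul_comm]
  · intro v
    rw [dot_mulVec_expand]
    have : ∑ i, ∑ j, (Matrix.of fun i j => x i * x j : Matrix (Fin n) (Fin n) ℝ) i j * v i * v j
        = (∑ i, x i * v i) ^ 2 := by
      rw [sq, Finset.sum_mul_sum]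
      exact Finset.sum_congr rfl fun i _ => Finset.sum_congr rfl fun j _ => by
        simp [Matrix.of_apply]; ring
    rw [this]
    positivity

end PsdEntries
section Sets
variable {n : ℕ} (G : SimpleGraph (Fin n)) [DecidableRel G.Adj]

def SB (G : SimpleGraph (Fin n)) [DecidableRel G.Adj] : Set ℝ :=
  {r | ∃ d : Fin n → ℝ, r = gB G d}

def SP (G : SimpleGraph (Fin n)) [DecidableRel G.Adj] : Set ℝ :=
  {r | ∃ Y : Matrix (Fin n) (Fin n) ℝ, Y.PosSemidef ∧
    (∀ i, Y i i = 1) ∧ (∑ i, ∑ j, Y i j) = 0 ∧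
    r = ∑ i, ∑ j, if i < j then adjA G i j * (1 - Y i j) / 2 else 0}

def SD (G : SimpleGraph (Fin n)) [DecidableRel G.Adj] : Set ℝ :=
  {r | ∃ (x₀ : ℝ) (x : Fin n → ℝ),
    (-(adjA G) - x₀ • Jmat n - Matrix.diagonal x).PosSemidef ∧
    r = (edgeCount G : ℝ) / 2 + (∑ i, x i) / 4}

lemma hB_eq : hB G = sSup (SB G) := rfl
lemma hP_eq : hP G = sInf (SP G) := rfl
lemma hD_eq : hD G = sSup (SD G) := rfl

lemma dualM_herm (x₀ : ℝ) (x : Fin n → ℝ) :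
    (-(adjA G) - x₀ • Jmat n - Matrix.diagonal x).IsHermitian := by
  show _ = _
  ext i j
  simp only [Matrix.conjTranspose_apply, Matrix.sub_apply, Matrix.neg_apply,
    Matrix.smul_apply, Jmat, Matrix.diagonal_apply, smul_eq_mul, Matrix.of_apply,
    star_trivial]
  rw [adjA_symm]
  by_cases h : i = j
  · subst h; simp
  · simp [h, Ne.symm h]

lemma SB_nonempty : (SB G).Nonempty := ⟨gB G 0, 0, rfl⟩

lemma SB_bddAbove (hn2 : 2 ≤ n) (hne : Even n) : BddAbove (SB G) := by
  refine ⟨Ub G, ?_⟩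
  rintro r ⟨d, rfl⟩
  exact gB_le_Ub G hn2 hne d

lemma SD_nonempty : (SD G).Nonempty := by
  refine ⟨_, 0, (fun _ => -(2 * n)), ?_, rfl⟩
  rw [psd_iff]
  refine ⟨dualM_herm G _ _, fun v => ?_⟩
  rw [quadM]
  have h1 := quad_adjA_le G v
  have h2 : (0:ℝ) ≤ (n : ℝ) * ∑ i, (v i) ^ 2 := by positivity
  have h3 : ∑ i, -(2 * (n:ℝ)) * (v i) ^ 2 = -(2 * (n:ℝ)) * ∑ i, (v i) ^ 2 :=
    (Finset.mul_sum _ _ _).symm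
  rw [h3]
  nlinarith

lemma SD_bddAbove (hn2 : 2 ≤ n) (hne : Even n) : BddAbove (SD G) := by
  refine ⟨Ub G, ?_⟩
  rintro r ⟨x₀, x, hpsd, rfl⟩
  exact (dualfeas_le_gB G hn2 x₀ x hpsd).trans (gB_le_Ub G hn2 hne x)

lemma SP_nonempty (hn2 : 2 ≤ n) (hne : Even n) : (SP G).Nonempty := by
  refine ⟨_, Matrix.of fun i j => xbar n i * xbar n j, outer_posSemidef _, ?_, ?_, rfl⟩
  · intro i
    have := xbar_sq (n := n) i
    simpa [Matrix.of_apply, sq] using this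
  · have : ∑ i, ∑ j, xbar n i * xbar n j = (∑ i, xbar n i) * (∑ j, xbar n j) := by
      rw [Finset.sum_mul_sum]
    simp only [Matrix.of_apply]
    rw [this, xbar_sum hne]
    ring

lemma SP_bddBelow : BddBelow (SP G) := by
  refine ⟨0, ?_⟩
  rintro r ⟨Y, hY, hdiag, hsum0, rfl⟩
  refine Finset.sum_nonneg fun i _ => Finset.sum_nonneg fun j _ => ?_
  split
  · have hA0 : (0:ℝ) ≤ adjA G i j := by simp only [adjA, Matrix.of_apply]; split <;> norm_num
    have := psd_offdiag_le_one hY hdiag i j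
    have h1Y : 0 ≤ 1 - Y i j := by linarith
    positivity
  · exact le_refl 0
end Sets
lemma le_of_sq_le_sq' {a b : ℝ} (ha : 0 ≤ a) (h : b ^ 2 ≤ a ^ 2) : b ≤ a := by
  nlinarith [sq_nonneg (a - b), sq_nonneg (a + b)]

lemma amgm_aux {eps Cc P t R : ℝ} (heps : 0 < eps) (hP : 0 ≤ P) (hCc : 0 ≤ Cc)
    (hR : R ^ 2 ≤ Cc * P) : 2 * t * R ≤ eps * P + Cc / eps * t ^ 2 := by
  have ha : 0 ≤ eps * P + Cc / eps * t ^ 2 := by positivity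
  refine le_of_sq_le_sq' ha ?_
  have hkey : (eps * P + Cc / eps * t ^ 2) ^ 2 - (2 * t * R) ^ 2
      = (eps * P - Cc / eps * t ^ 2) ^ 2 + 4 * (Cc * P * t ^ 2 - t ^ 2 * R ^ 2) := by
    field_simp
    ring
  nlinarith [sq_nonneg (eps * P - Cc / eps * t ^ 2), mul_nonneg (sq_nonneg t) (sub_nonneg.2 hR)]

section Dir2
variable {n : ℕ} (G : SimpleGraph (Fin n)) [DecidableRel G.Adj]

lemma gB_sub_le_hD (hn2 : 2 ≤ n) (hne : Even n) (d : Fin n → ℝ) {ε : ℝ} (hε : 0 < ε) :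
    gB G d - (n : ℝ) * ε / 4 ≤ hD G := by
  have hnpos : (0:ℝ) < n := by
    have : 0 < n := by omega
    exact_mod_cast this
  have hn0 : (n:ℝ) ≠ 0 := ne_of_gt hnpos
  set B := adjA G + Matrix.diagonal d with hBdef
  have hBsym : ∀ i j, B i j = B j i := by
    intro i j
    simp only [hBdef, Matrix.add_apply, Matrix.diagonal_apply]
    rw [adjA_symm]
    by_cases h : i = j
    · subst h; rfl
    · simp [h, Ne.symm h]
  set lam := lamS B with hlamdef
  set c : Fin n → ℝ := fun j => ∑ i, B i j with hcdef
  set Cc := ∑ j, (c j) ^ 2 with hCcdef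
  set s := msum B with hsdef
  set x₀ := ((lam + ε) * n - s - Cc / ε) / (n ^ 2) with hx₀def
  set x : Fin n → ℝ := fun i => d i - (lam + ε) with hxdef
  have hCc0 : 0 ≤ Cc := Finset.sum_nonneg fun j _ => sq_nonneg _
  -- PSD
  have hpsd : (-(adjA G) - x₀ • Jmat n - Matrix.diagonal x).PosSemidef := by
    rw [psd_iff]
    refine ⟨dualM_herm G _ _, fun v => ?_⟩
    rw [quadM]
    set t := (∑ i, v i) / n with htdef
    set u : Fin n → ℝ := fun i => v i - t with hudef
    have hv : ∀ i, v i = u i + t := fun i => by simp [hudef]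
    have husum : ∑ i, u i = 0 := by
      simp only [hudef, Finset.sum_sub_distrib, Finset.sum_const, card_univ,
        Fintype.card_fin, nsmul_eq_mul, htdef]
      field_simp; ring
    have hvsum : ∑ i, v i = n * t := by rw [htdef]; field_simp
    set P := ∑ i, (u i) ^ 2 with hPdef
    have hP0 : 0 ≤ P := Finset.sum_nonneg fun i _ => sq_nonneg _
    have hvsq : ∑ i, (v i) ^ 2 = P + n * t ^ 2 := by
      have : ∀ i, (v i) ^ 2 = (u i) ^ 2 + 2 * t * u i + t ^ 2 := fun i => by
        rw [hv i]; ring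
      simp only [this, Finset.sum_add_distrib, Finset.sum_const, card_univ,
        Fintype.card_fin, nsmul_eq_mul, ← Finset.mul_sum, husum]
      ring
    set R := ∑ j, c j * u j with hRdef
    -- expansion of v B v
    have hvBv : v ⬝ᵥ B.mulVec v = u ⬝ᵥ B.mulVec u + 2 * t * R + t ^ 2 * s := by
      rw [dot_mulVec_expand, dot_mulVec_expand]
      have key : ∀ i j, B i j * v i * v j
          = B i j * u i * u j + t * (B i j * u i) + t * (B i j * u j)
            + t ^ 2 * B i j := by
        intro i j; rw [hv i, hv j]; ring
      simp only [key, Finset.sum_add_distrib]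
      have e1 : ∑ i, ∑ j, t * (B i j * u i) = t * ∑ i, c i * u i := by
        rw [Finset.mul_sum]
        refine Finset.sum_congr rfl fun i _ => ?_
        rw [← Finset.mul_sum, ← Finset.sum_mul]
        have : ∑ j, B i j = c i := by
          rw [hcdef]
          exact Finset.sum_congr rfl fun j _ => hBsym i j
        rw [this]; try ring
      have e2 : ∑ i, ∑ j, t * (B i j * u j) = t * ∑ j, c j * u j := by
        rw [Finset.sum_comm, Finset.mul_sum]
        refine Finset.sum_congr rfl fun j _ => ?_
        rw [← Finset.mul_sum, ← Finset.sum_mul]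
      have e3 : ∑ i, ∑ j, t ^ 2 * B i j = t ^ 2 * s := by
        rw [hsdef, msum, Finset.mul_sum]
        exact Finset.sum_congr rfl fun i _ => by rw [Finset.mul_sum]
      have eR : ∑ i, c i * u i = R := rfl
      rw [e1, e2, e3, eR, hRdef]
      ring
    -- quadM target in terms of B
    have hAv : v ⬝ᵥ (adjA G).mulVec v = v ⬝ᵥ B.mulVec v - ∑ i, d i * (v i) ^ 2 := by
      rw [hBdef, quadB]; ring
    have hxv : ∑ i, x i * (v i) ^ 2 = ∑ i, d i * (v i) ^ 2 - (lam + ε) * ∑ i, (v i) ^ 2 := by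
      simp only [hxdef, sub_mul, Finset.sum_sub_distrib, ← Finset.mul_sum]
    have huBu : u ⬝ᵥ B.mulVec u ≤ lam * P := quad_le_lamS husum
    have hx₀n : x₀ * (n:ℝ) ^ 2 = (lam + ε) * n - s - Cc / ε := by
      rw [hx₀def]; field_simp
    have hRsq : R ^ 2 ≤ Cc * P := by
      have := Finset.sum_mul_sq_le_sq_mul_sq (univ : Finset (Fin n)) c u
      simpa [hRdef, hCcdef, hPdef] using this
    have hamgm := amgm_aux (t := t) hε hP0 hCc0 hRsq
    -- assemble
    rw [hAv, hxv, hvsq, hvsum]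
    have expand : -(u ⬝ᵥ B.mulVec u + 2*t*R + t^2*s - ∑ i, d i * (v i)^2)
        - x₀ * ((n:ℝ)*t)^2 - (∑ i, d i * (v i)^2 - (lam+ε)*(P + n*t^2))
        = ((lam + ε) * P - u ⬝ᵥ B.mulVec u) + (Cc / ε * t^2 - 2*t*R) := by
      have : x₀ * ((n:ℝ)*t)^2 = ((lam + ε) * n - s - Cc / ε) * t ^ 2 := by
        rw [mul_pow, ← mul_assoc, hx₀n]
      rw [this]
      ring
    rw [hvBv, expand]
    nlinarith [hamgm, huBu]
  -- value computation
  have hxsum : ∑ i, x i = (∑ i, d i) - n * (lam + ε) := by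
    simp [hxdef, Finset.sum_sub_distrib, Finset.sum_const, card_univ, mul_comm]
    ring
  have hmem : (edgeCount G : ℝ) / 2 + (∑ i, x i) / 4 ∈ SD G := ⟨x₀, x, hpsd, rfl⟩
  have hle := le_csSup (SD_bddAbove G hn2 hne) hmem
  rw [← hD_eq] at hle
  have hmsum : msum B = 2 * (edgeCount G : ℝ) + ∑ i, d i := by
    rw [hBdef, msum_add, msum_diagonal, msum_adjA]
  have hgB : gB G d = (msum B - n * lam) / 4 := rfl
  rw [hgB, hmsum, hxsum] at *
  linarith [hle]

end Dir2
section Sep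
variable {n : ℕ} (G : SimpleGraph (Fin n)) [DecidableRel G.Adj]

/-- primal objective as affine function of the matrix -/
def objP (G : SimpleGraph (Fin n)) [DecidableRel G.Adj]
    (X : Matrix (Fin n) (Fin n) ℝ) : ℝ :=
  (edgeCount G : ℝ) / 2 - (∑ i, ∑ j, adjA G i j * X i j) / 4

/-- the closed convex set used in the separation argument -/
def SetA (G : SimpleGraph (Fin n)) [DecidableRel G.Adj] :
    Set ((Fin n → ℝ) × ℝ × ℝ) :=
  {z | ∃ X : Matrix (Fin n) (Fin n) ℝ, X.PosSemidef ∧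
    (∀ i, z.1 i = X i i - 1) ∧ z.2.1 = msum X ∧ objP G X ≤ z.2.2}

lemma psd_comb {X W : Matrix (Fin n) (Fin n) ℝ} (hX : X.PosSemidef) (hW : W.PosSemidef)
    {a b : ℝ} (ha : 0 ≤ a) (hb : 0 ≤ b) : (a • X + b • W).PosSemidef := by
  rw [psd_iff]
  constructor
  · show _ = _
    rw [Matrix.conjTranspose_add, Matrix.conjTranspose_smul, Matrix.conjTranspose_smul,
      hX.1, hW.1]
    simp
  · intro v
    rw [Matrix.add_mulVec, Matrix.smul_mulVec, Matrix.smul_mulVec,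
      dotProduct_add, dotProduct_smul, dotProduct_smul, smul_eq_mul, smul_eq_mul]
    have h1 := ((psd_iff X).1 hX).2 v
    have h2 := ((psd_iff W).1 hW).2 v
    positivity

lemma psd_smul' {X : Matrix (Fin n) (Fin n) ℝ} (hX : X.PosSemidef) {a : ℝ} (ha : 0 ≤ a) :
    (a • X).PosSemidef := by
  have := psd_comb hX hX ha (le_refl 0)
  simpa using this

lemma comb_apply (X W : Matrix (Fin n) (Fin n) ℝ) (a b : ℝ) (i j : Fin n) :
    (a • X + b • W) i j = a * X i j + b * W i j := by
  simp [Matrix.add_apply, Matrix.smul_apply]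

lemma msum_comb (X W : Matrix (Fin n) (Fin n) ℝ) (a b : ℝ) :
    msum (a • X + b • W) = a * msum X + b * msum W := by
  simp only [msum, comb_apply, Finset.sum_add_distrib, Finset.mul_sum]

lemma objP_comb (X W : Matrix (Fin n) (Fin n) ℝ) {a b : ℝ} (hab : a + b = 1) :
    objP G (a • X + b • W) = a * objP G X + b * objP G W := by
  unfold objP
  have h1 : ∑ i, ∑ j, adjA G i j * (a • X + b • W) i j
      = a * (∑ i, ∑ j, adjA G i j * X i j) + b * (∑ i, ∑ j, adjA G i j * W i j) := by
    simp only [comb_apply, mul_add, Finset.sum_add_distrib, Finset.mul_sum]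
    congr 1 <;> exact Finset.sum_congr rfl fun i _ => Finset.sum_congr rfl fun j _ => by ring
  rw [h1]
  have : a * ((edgeCount G : ℝ)/2) + b * ((edgeCount G : ℝ)/2) = (edgeCount G : ℝ)/2 := by
    rw [← add_mul, hab]; ring
  field_simp
  linarith [this]

lemma SetA_convex : Convex ℝ (SetA G) := by
  rintro z ⟨X, hX, hzd, hzs, hzo⟩ w ⟨W, hW, hwd, hws, hwo⟩ a b ha hb hab
  refine ⟨a • X + b • W, psd_comb hX hW ha hb, ?_, ?_, ?_⟩
  · intro i
    have : (a • z + b • w).1 i = a * z.1 i + b * w.1 i := rfl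
    rw [this, hzd i, hwd i, comb_apply]
    nlinarith [hab]
  · have : (a • z + b • w).2.1 = a * z.2.1 + b * w.2.1 := rfl
    rw [this, hzs, hws, msum_comb]
  · have h2 : (a • z + b • w).2.2 = a * z.2.2 + b * w.2.2 := rfl
    rw [h2, objP_comb G X W hab]
    have := mul_le_mul_of_nonneg_left hzo ha
    have := mul_le_mul_of_nonneg_left hwo hb
    linarith

end Sep
open Filter Topology in
lemma SetA_closed {n : ℕ} (G : SimpleGraph (Fin n)) [DecidableRel G.Adj] :
    IsClosed (SetA G) := by
  rw [← isSeqClosed_iff_isClosed]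
  intro zs z hzs hz
  choose X hXpsd hXd hXs hXo using hzs
  have h1 : Bornology.IsBounded (Set.range fun k => (zs k).1) :=
    Metric.isBounded_range_of_tendsto _ ((continuous_fst.tendsto z).comp hz)
  obtain ⟨C, hC⟩ := isBounded_iff_forall_norm_le.1 h1
  have hC0 : 0 ≤ C := le_trans (norm_nonneg _) (hC _ ⟨0, rfl⟩)
  have hdiag_bd : ∀ k i, X k i i ≤ C + 1 := by
    intro k i
    have h2 : ‖(zs k).1‖ ≤ C := hC _ ⟨k, rfl⟩
    have h3 : |(zs k).1 i| ≤ C := by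
      have := norm_le_pi_norm ((zs k).1) i
      rw [Real.norm_eq_abs] at this
      linarith
    have h4 := hXd k i
    have h5 := abs_le.1 h3
    have h6 : X k i i = (zs k).1 i + 1 := by rw [h4]; ring
    linarith [h5.2]
  have hent_bd : ∀ k i j, |X k i j| ≤ C + 1 := fun k i j =>
    (psd_entry_abs_le (hXpsd k) i j).trans (by linarith [hdiag_bd k i, hdiag_bd k j])
  set S : Set (Fin n → Fin n → ℝ) := {f | ∀ i j, |f i j| ≤ C + 1} with hSdef
  have hSclosed : IsClosed S := by
    have hrw : S = ⋂ i, ⋂ j, {f : Fin n → Fin n → ℝ | |f i j| ≤ C + 1} := by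
      ext f; simp [hSdef, Set.mem_iInter]
    rw [hrw]
    exact isClosed_iInter fun i => isClosed_iInter fun j =>
      isClosed_le (Continuous.abs ((continuous_apply j).comp (continuous_apply i)))
        continuous_const
  have hSbdd : Bornology.IsBounded S := by
    rw [isBounded_iff_forall_norm_le]
    refine ⟨C + 1, fun f hf => ?_⟩
    refine (pi_norm_le_iff_of_nonneg (by linarith)).2 fun i => ?_
    refine (pi_norm_le_iff_of_nonneg (by linarith)).2 fun j => ?_
    simpa [Real.norm_eq_abs] using hf i j
  have hmemS : ∀ k, (fun i j => X k i j) ∈ S := fun k i j => hent_bd k i j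
  obtain ⟨flim, hfS, φ, hφ, hconv⟩ :=
    (Metric.isCompact_of_isClosed_isBounded hSclosed hSbdd).tendsto_subseq hmemS
  have hzφ : Tendsto (fun k => zs (φ k)) atTop (nhds z) := hz.comp hφ.tendsto_atTop
  have hent : ∀ i j, Tendsto (fun k => X (φ k) i j) atTop (nhds (flim i j)) := by
    intro i j
    have hc : Continuous fun f : Fin n → Fin n → ℝ => f i j :=
      (continuous_apply j).comp (continuous_apply i)
    have := (hc.tendsto flim).comp hconv
    exact this
  refine ⟨Matrix.of flim, ?_, ?_, ?_, ?_⟩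
  · rw [psd_iff]
    constructor
    · show _ = _
      ext i j
      simp only [Matrix.conjTranspose_apply, Matrix.of_apply, star_trivial]
      have e : (fun k => X (φ k) j i) = fun k => X (φ k) i j :=
        funext fun k => psd_symm_entries (hXpsd (φ k)) j i
      exact tendsto_nhds_unique (e ▸ hent j i) (hent i j)
    · intro v
      rw [dot_mulVec_expand]
      have hsum : Tendsto (fun k => ∑ i, ∑ j, X (φ k) i j * v i * v j) atTop
          (nhds (∑ i, ∑ j, (Matrix.of flim) i j * v i * v j)) :=
        tendsto_finset_sum _ fun i _ => tendsto_finset_sum _ fun j _ =>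
          ((hent i j).mul_const (v i)).mul_const (v j)
      refine le_of_tendsto_of_tendsto' tendsto_const_nhds hsum fun k => ?_
      rw [← dot_mulVec_expand]
      exact ((psd_iff _).1 (hXpsd (φ k))).2 v
  · intro i
    have hA : Tendsto (fun k => (zs (φ k)).1 i) atTop (nhds (z.1 i)) :=
      ((continuous_apply i).tendsto z.1).comp ((continuous_fst.tendsto z).comp hzφ)
    have e : (fun k => (zs (φ k)).1 i) = fun k => X (φ k) i i - 1 :=
      funext fun k => hXd (φ k) i
    have hB : Tendsto (fun k => (zs (φ k)).1 i) atTop (nhds (flim i i - 1)) :=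
      e ▸ ((hent i i).sub_const 1)
    exact tendsto_nhds_unique hA hB
  · have hA : Tendsto (fun k => (zs (φ k)).2.1) atTop (nhds z.2.1) :=
      (continuous_fst.tendsto z.2).comp ((continuous_snd.tendsto z).comp hzφ)
    have hB' : Tendsto (fun k => msum (X (φ k))) atTop (nhds (msum (Matrix.of flim))) := by
      unfold msum
      exact tendsto_finset_sum _ fun i _ => tendsto_finset_sum _ fun j _ => hent i j
    have e : (fun k => (zs (φ k)).2.1) = fun k => msum (X (φ k)) :=
      funext fun k => hXs (φ k)
    exact tendsto_nhds_unique hA (e ▸ hB')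
  · have hA : Tendsto (fun k => (zs (φ k)).2.2) atTop (nhds z.2.2) :=
      (continuous_snd.tendsto z.2).comp ((continuous_snd.tendsto z).comp hzφ)
    have hB' : Tendsto (fun k => objP G (X (φ k))) atTop (nhds (objP G (Matrix.of flim))) := by
      unfold objP
      exact tendsto_const_nhds.sub ((tendsto_finset_sum _ fun i _ =>
        tendsto_finset_sum _ fun j _ => (hent i j).const_mul (adjA G i j)).div_const 4)
    exact le_of_tendsto_of_tendsto' hB' hA fun k => hXo (φ k)
section Decomp
variable {n : ℕ}

lemma f_decomp (f : ((Fin n → ℝ) × ℝ × ℝ) →L[ℝ] ℝ) (v : Fin n → ℝ) (s t : ℝ) :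
    f (v, s, t) = (∑ i, v i * f (Pi.single i 1, 0, 0))
      + s * f (0, 1, 0) + t * f (0, 0, 1) := by
  have h2 : ∀ i, v i • (Pi.single i 1 : Fin n → ℝ) = Pi.single i (v i) := by
    intro i
    rw [← Pi.single_smul, smul_eq_mul, mul_one]
  have hv : ((v, s, t) : (Fin n → ℝ) × ℝ × ℝ)
      = (∑ i, v i • ((Pi.single i 1 : Fin n → ℝ), (0:ℝ), (0:ℝ)))
        + s • ((0 : Fin n → ℝ), (1:ℝ), (0:ℝ)) + t • ((0 : Fin n → ℝ), (0:ℝ), (1:ℝ)) := by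
    refine Prod.ext ?_ (Prod.ext ?_ ?_)
    · simp only [Prod.fst_add, Prod.fst_sum]
      have : ∀ i : Fin n, (v i • ((Pi.single i 1 : Fin n → ℝ), (0:ℝ), (0:ℝ))).1
          = Pi.single i (v i) := fun i => h2 i ▸ rfl
      simp only [this, univ_sum_single]
      simp
    · simp only [Prod.snd_add, Prod.fst_add, Prod.snd_sum, Prod.fst_sum]
      have : ∀ i : Fin n, ((v i • ((Pi.single i 1 : Fin n → ℝ), (0:ℝ), (0:ℝ))).2).1
          = (0:ℝ) := fun i => by simp
      simp only [this]
      simp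
    · simp only [Prod.snd_add, Prod.snd_sum]
      have : ∀ i : Fin n, ((v i • ((Pi.single i 1 : Fin n → ℝ), (0:ℝ), (0:ℝ))).2).2
          = (0:ℝ) := fun i => by simp
      simp only [this]
      simp
  rw [hv, map_add, map_add, map_sum]
  simp only [f.map_smul, smul_eq_mul]

end Decomp

section Main
variable {n : ℕ} (G : SimpleGraph (Fin n)) [DecidableRel G.Adj]

lemma hP_le_hD (hn2 : 2 ≤ n) (hne : Even n) : hP G ≤ hD G := by
  by_contra hcon
  push_neg at hcon
  set γ := (hD G + hP G) / 2 with hγdef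
  have hDγ : hD G < γ := by rw [hγdef]; linarith
  have hγP : γ < hP G := by rw [hγdef]; linarith
  have hznotin : ((0 : Fin n → ℝ), (0:ℝ), γ) ∉ SetA G := by
    rintro ⟨X, hX, hXd, hXs, hXo⟩
    have hdiag : ∀ i, X i i = 1 := by
      intro i
      have := hXd i
      simp only [Pi.zero_apply] at this
      linarith
    have hsum0 : (∑ i, ∑ j, X i j) = 0 := (hXs.symm : msum X = 0)
    have hmem : objP G X ∈ SP G := by
      refine ⟨X, hX, hdiag, hsum0, ?_⟩
      rw [primal_obj_eq G hX]
      rfl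
    have := csInf_le (SP_bddBelow G) hmem
    rw [← hP_eq] at this
    exact absurd (this.trans hXo) (not_le.2 hγP)
  obtain ⟨f, u, hfa, hfz⟩ :=
    geometric_hahn_banach_closed_point (SetA_convex G) (SetA_closed G) hznotin
  set lambda : Fin n → ℝ := fun i => f (Pi.single i 1, 0, 0) with hlamdef
  set lam0 : ℝ := f (0, 1, 0) with hlam0def
  set mu : ℝ := f (0, 0, 1) with hmudef
  have hdec : ∀ (v : Fin n → ℝ) (s t : ℝ),
      f (v, s, t) = (∑ i, v i * lambda i) + s * lam0 + t * mu := fun v s t =>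
    f_decomp f v s t
  have hfzval : u < γ * mu := by
    have h := hfz
    rw [hdec] at h
    simpa using h
  set SL := ∑ i, lambda i with hSLdef
  set u' := u + SL - mu * ((edgeCount G : ℝ) / 2) with hu'def
  have hmain : ∀ X : Matrix (Fin n) (Fin n) ℝ, X.PosSemidef →
      (∑ i, (X i i - 1) * lambda i) + msum X * lam0 + objP G X * mu < u := by
    intro X hX
    have hmem : ((fun i => X i i - 1), msum X, objP G X) ∈ SetA G :=
      ⟨X, hX, fun i => rfl, rfl, le_refl _⟩
    have := hfa _ hmem
    rw [hdec] at this
    exact this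
  have hmu_nonpos : mu ≤ 0 := by
    by_contra hmu
    push_neg at hmu
    set T := max ((edgeCount G : ℝ) / 2) ((u + SL) / mu) with hTdef
    have hTobj : objP G 0 ≤ T := by
      have : objP G 0 = (edgeCount G : ℝ) / 2 := by simp [objP]
      rw [this]
      exact le_max_left _ _
    have hmem : ((fun i => (0:Matrix (Fin n) (Fin n) ℝ) i i - 1),
        msum (0:Matrix (Fin n) (Fin n) ℝ), T) ∈ SetA G :=
      ⟨0, Matrix.PosSemidef.zero, fun i => rfl, rfl, hTobj⟩
    have h1 := hfa _ hmem
    rw [hdec] at h1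
    have h0 : msum (0:Matrix (Fin n) (Fin n) ℝ) = 0 := by simp [msum]
    have h2 : (∑ i, ((0:Matrix (Fin n) (Fin n) ℝ) i i - 1) * lambda i) = -SL := by
      simp [hSLdef]
    have hT2 : (u + SL) / mu ≤ T := le_max_right _ _
    rw [h2, h0] at h1
    have h3 : T * mu < u + SL := by linarith
    rw [div_le_iff₀ hmu] at hT2
    linarith
  have hipN : ∀ X : Matrix (Fin n) (Fin n) ℝ, X.PosSemidef →
      (∑ i, lambda i * X i i) + lam0 * msum X
        - mu / 4 * (∑ i, ∑ j, adjA G i j * X i j) < u' := by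
    intro X hX
    have h1 := hmain X hX
    have h2 : (∑ i, (X i i - 1) * lambda i) = (∑ i, lambda i * X i i) - SL := by
      rw [hSLdef, ← Finset.sum_sub_distrib]
      exact Finset.sum_congr rfl fun i _ => by ring
    rw [h2, objP] at h1
    have e1 : msum X * lam0 = lam0 * msum X := mul_comm _ _
    have e2 : ((edgeCount G : ℝ) / 2 - (∑ i, ∑ j, adjA G i j * X i j) / 4) * mu
        = mu * ((edgeCount G : ℝ) / 2) - mu / 4 * (∑ i, ∑ j, adjA G i j * X i j) := by
      ring
    rw [hu'def]
    linarith [h1, e1, e2]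
  have hu'pos : 0 < u' := by
    have h := hipN 0 Matrix.PosSemidef.zero
    simp [msum] at h
    linarith
  have hcone : ∀ X : Matrix (Fin n) (Fin n) ℝ, X.PosSemidef →
      (∑ i, lambda i * X i i) + lam0 * msum X
        - mu / 4 * (∑ i, ∑ j, adjA G i j * X i j) ≤ 0 := by
    intro X hX
    by_contra hq
    push_neg at hq
    set q := (∑ i, lambda i * X i i) + lam0 * msum X
      - mu / 4 * (∑ i, ∑ j, adjA G i j * X i j) with hqdef
    have hqne : q ≠ 0 := ne_of_gt hq
    have ha : 0 < u' / q := div_pos hu'pos hq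
    have hX' := psd_smul' hX ha.le
    have h1 := hipN _ hX'
    have hsm : ∀ i j, ((u'/q) • X) i j = (u'/q) * X i j := fun i j => rfl
    have e1 : (∑ i, lambda i * ((u'/q) • X) i i) = (u'/q) * ∑ i, lambda i * X i i := by
      rw [Finset.mul_sum]
      exact Finset.sum_congr rfl fun i _ => by rw [hsm]; ring
    have e2 : msum ((u'/q) • X) = (u'/q) * msum X := by
      show (∑ i, ∑ j, ((u'/q) • X) i j) = _
      rw [msum, Finset.mul_sum]
      exact Finset.sum_congr rfl fun i _ => by
        rw [Finset.mul_sum]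
        exact Finset.sum_congr rfl fun j _ => hsm i j
    have e3 : (∑ i, ∑ j, adjA G i j * ((u'/q) • X) i j)
        = (u'/q) * ∑ i, ∑ j, adjA G i j * X i j := by
      rw [Finset.mul_sum]
      refine Finset.sum_congr rfl fun i _ => ?_
      rw [Finset.mul_sum]
      exact Finset.sum_congr rfl fun j _ => by rw [hsm]; ring
    rw [e1, e2, e3] at h1
    have : (u'/q) * ∑ i, lambda i * X i i + lam0 * ((u'/q) * msum X)
        - mu / 4 * ((u'/q) * ∑ i, ∑ j, adjA G i j * X i j) = (u'/q) * q := by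
      rw [hqdef]; ring
    rw [this, div_mul_cancel₀ _ hqne] at h1
    exact lt_irrefl _ h1
  -- quadratic form consequence via outer products
  have hquad : ∀ v : Fin n → ℝ,
      (∑ i, lambda i * (v i) ^ 2) + lam0 * (∑ i, v i) ^ 2
        - mu / 4 * (v ⬝ᵥ (adjA G).mulVec v) ≤ 0 := by
    intro v
    have h := hcone (Matrix.of fun i j => v i * v j) (outer_posSemidef v)
    have e1 : (∑ i, lambda i * (Matrix.of fun i j => v i * v j) i i)
        = ∑ i, lambda i * (v i) ^ 2 := by
      exact Finset.sum_congr rfl fun i _ => by simp [Matrix.of_apply, sq]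
    have e2 : msum (Matrix.of fun i j => v i * v j) = (∑ i, v i) ^ 2 := by
      rw [msum, sq, Finset.sum_mul_sum]
      rfl
    have e3 : (∑ i, ∑ j, adjA G i j * (Matrix.of fun i j => v i * v j) i j)
        = v ⬝ᵥ (adjA G).mulVec v := by
      rw [dot_mulVec_expand]
      exact Finset.sum_congr rfl fun i _ => Finset.sum_congr rfl fun j _ => by
        simp [Matrix.of_apply]; ring
    rw [e1, e2, e3] at h
    exact h
  -- case split on mu
  rcases lt_or_eq_of_le hmu_nonpos with hmu | hmu
  · -- mu < 0 : build a dual feasible point with value > γ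
    set x₀' := -4 * lam0 / mu with hx0def
    set x' : Fin n → ℝ := fun i => -4 * lambda i / mu with hxdef
    have hpsd : (-(adjA G) - x₀' • Jmat n - Matrix.diagonal x').PosSemidef := by
      rw [psd_iff]
      refine ⟨dualM_herm G _ _, fun v => ?_⟩
      rw [quadM]
      have h := hquad v
      have hxv : ∑ i, x' i * (v i) ^ 2 = (-4/mu) * ∑ i, lambda i * (v i) ^ 2 := by
        rw [Finset.mul_sum]
        refine Finset.sum_congr rfl fun i _ => ?_
        rw [hxdef]
        field_simp
      rw [hxv, hx0def]
      have hmune : mu ≠ 0 := ne_of_lt hmu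
      have hkey : -(v ⬝ᵥ (adjA G).mulVec v) - (-4 * lam0 / mu) * (∑ i, v i) ^ 2
          - (-4/mu) * ∑ i, lambda i * (v i) ^ 2
          = (4/mu) * ((∑ i, lambda i * (v i) ^ 2) + lam0 * (∑ i, v i) ^ 2
            - mu / 4 * (v ⬝ᵥ (adjA G).mulVec v)) := by
        field_simp
        ring
      rw [hkey]
      have h4 : (4/mu) ≤ 0 := by
        apply div_nonpos_of_nonneg_of_nonpos <;> linarith
      nlinarith [mul_nonneg (neg_nonneg.2 h4) (neg_nonneg.2 h)]
    have hxsum : ∑ i, x' i = -4 * SL / mu := by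
      rw [hSLdef, hxdef, ← Finset.sum_div, ← Finset.mul_sum]
    have hmem : (edgeCount G : ℝ) / 2 + (∑ i, x' i) / 4 ∈ SD G := ⟨x₀', x', hpsd, rfl⟩
    have hle := le_csSup (SD_bddAbove G hn2 hne) hmem
    rw [← hD_eq] at hle
    set V := ∑ i, x' i with hVdef
    have hmune : mu ≠ 0 := ne_of_lt hmu
    have hVmu : mu * V = -4 * SL := by
      rw [hxsum]
      field_simp
    have hSLeq : SL = -(mu * V) / 4 := by rw [hVmu]; ring
    have h6 : 0 < mu * (γ - V/4 - (edgeCount G : ℝ)/2) := by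
      have : mu * (γ - V/4 - (edgeCount G : ℝ)/2)
          = γ * mu - (mu * V)/4 - mu * ((edgeCount G : ℝ)/2) := by ring
      rw [this]
      rw [hu'def] at hu'pos
      linarith [hu'pos, hfzval, hSLeq]
    have h7 : γ - V/4 - (edgeCount G : ℝ)/2 < 0 := by
      by_contra h7
      push_neg at h7
      have := mul_nonpos_of_nonpos_of_nonneg hmu.le h7
      linarith
    linarith [hle, hDγ]
  · -- mu = 0
    have hquad0 : ∀ v : Fin n → ℝ,
        (∑ i, lambda i * (v i) ^ 2) + lam0 * (∑ i, v i) ^ 2 ≤ 0 := by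
      intro v
      have h := hquad v
      rw [hmu] at h
      simpa using h
    have hSL : 0 < SL := by
      have h9 : (0:ℝ) < u + SL - mu * ((edgeCount G : ℝ)/2) := hu'def ▸ hu'pos
      rw [hmu] at h9 hfzval
      simp at hfzval
      linarith
    obtain ⟨tstar, ht0, htq⟩ : ∃ t : ℝ, 0 ≤ t ∧ 4 * (hD G + 1) + 2 * (n:ℝ)^2 ≤ t * SL := by
      refine ⟨max 0 ((4 * (hD G + 1) + 2 * (n:ℝ)^2) / SL), le_max_left _ _, ?_⟩
      have h1 : (4 * (hD G + 1) + 2 * (n:ℝ)^2) / SL ≤ _ := le_max_right 0 _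
      rw [div_le_iff₀ hSL] at h1
      linarith
    set x₀'' := tstar * lam0 with hx0def2
    set x'' : Fin n → ℝ := fun i => tstar * lambda i - 2 * n with hxdef2
    have hpsd : (-(adjA G) - x₀'' • Jmat n - Matrix.diagonal x'').PosSemidef := by
      rw [psd_iff]
      refine ⟨dualM_herm G _ _, fun v => ?_⟩
      rw [quadM]
      have hxv : ∑ i, x'' i * (v i) ^ 2
          = tstar * (∑ i, lambda i * (v i) ^ 2) - 2 * n * ∑ i, (v i) ^ 2 := by
        rw [hxdef2, Finset.mul_sum, Finset.mul_sum, ← Finset.sum_sub_distrib]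
        exact Finset.sum_congr rfl fun i _ => by ring
      rw [hxv, hx0def2]
      have h1 := quad_adjA_le G v
      have h2 := hquad0 v
      have h3 : 0 ≤ tstar * (-((∑ i, lambda i * (v i) ^ 2) + lam0 * (∑ i, v i) ^ 2)) :=
        mul_nonneg ht0 (by linarith)
      have h3' : tstar * (-((∑ i, lambda i * (v i) ^ 2) + lam0 * (∑ i, v i) ^ 2))
          = -(tstar * (∑ i, lambda i * (v i) ^ 2)) - (tstar * lam0) * (∑ i, v i) ^ 2 := by
        ring
      have h4 : 0 ≤ (n:ℝ) * ∑ i, (v i) ^ 2 := by positivity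
      rw [h3'] at h3
      linarith
    have hxsum : ∑ i, x'' i = tstar * SL - 2 * n * n := by
      rw [hxdef2, hSLdef, Finset.sum_sub_distrib, ← Finset.mul_sum]
      simp [Finset.sum_const, card_univ]
      ring
    have hmem : (edgeCount G : ℝ) / 2 + (∑ i, x'' i) / 4 ∈ SD G := ⟨x₀'', x'', hpsd, rfl⟩
    have hle := le_csSup (SD_bddAbove G hn2 hne) hmem
    rw [← hD_eq] at hle
    have hE0 : (0:ℝ) ≤ (edgeCount G : ℝ) / 2 := by positivity
    rw [hxsum] at hle
    nlinarith [hle, htq, hE0]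

end Main
/-- Boppana's lower bound coincides with both Feige–Kilian SDP
bounds: `h(G) = h_p(G) = h_d(G)`. -/
theorem boppana_eq_feige_kilian {n : ℕ} (hn2 : 2 ≤ n) (hne : Even n)
    (G : SimpleGraph (Fin n)) [DecidableRel G.Adj] :
    hB G = hP G ∧ hP G = hD G := by
  have hnpos : (0:ℝ) < n := by
    have : 0 < n := by omega
    exact_mod_cast this
  have hBD : hB G = hD G := by
    apply le_antisymm
    · rw [hB_eq]
      refine csSup_le (SB_nonempty G) ?_
      rintro r ⟨d, rfl⟩
      refine le_of_forall_pos_le_add fun δ hδ => ?_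
      have hε : 0 < 4 * δ / n := by positivity
      have h1 := gB_sub_le_hD G hn2 hne d hε
      have h2 : (n:ℝ) * (4 * δ / n) / 4 = δ := by field_simp
      linarith [h1, h2.le, h2.ge]
    · rw [hD_eq]
      refine csSup_le (SD_nonempty G) ?_
      rintro r ⟨x₀, x, hpsd, rfl⟩
      have h1 := dualfeas_le_gB G hn2 x₀ x hpsd
      have h2 : gB G x ≤ hB G := le_csSup (SB_bddAbove G hn2 hne) ⟨x, rfl⟩
      linarith
  have hPD : hP G = hD G := by
    apply le_antisymm (hP_le_hD G hn2 hne)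
    rw [hD_eq, hP_eq]
    refine csSup_le (SD_nonempty G) ?_
    rintro r ⟨x₀, x, hpsd, rfl⟩
    refine le_csInf (SP_nonempty G hn2 hne) ?_
    rintro p ⟨Y, hY, hdiag, hsum0, rfl⟩
    exact weak_duality G x₀ x hpsd hY hdiag hsum0
  exact ⟨hBD.trans hPD.symm, hPD⟩
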